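/- Lower bound in Lemma 2 (1): Let t ≠ 0, ε > 0, 0 ≤ q ≤ 4, κ > 0, γ : ℝ → ℝ continuous with (1/2)|γ(0)| ≤ |γ(k)| ≤ (3/2)|γ(0)| on [−κ, κ], γ(0) ≠ 0, and 0 < ε|t|^{-1/2} ≤ (2π)^{-1/2}|γ(0)|^{1/2}κ². Then the supremum over |k| ≤ κ of ε^q (k² + ε²)^{-q/2} |sin((1/2) t ε^{-2} k⁴ γ(k))| is at least (1/3) · ε^{q/2}|t|^{q/4} / ((2π/3)^{1/2}|γ(0)|^{-1/2} + ε|t|^{1/2})^{q/2}. -/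

import Mathlib

open Real

/-- lower bound in Lemma 2, estimate (1), for `0 ≤ q ≤ 4`: the
supremum over `|k| ≤ κ` of `ε^q (k² + ε²)^{-q/2} |sin((1/2) t ε⁻² k⁴ γ(k))|` is
at least `(1/3) ε^{q/2} |t|^{q/4} / ((2π/3)^{1/2} |γ(0)|^{-1/2} + ε |t|^{1/2})^{q/2}`. -/
theorem stmt17 (t ε q κ : ℝ) (γ : ℝ → ℝ) (ht : t ≠ 0) (hε : 0 < ε)
    (hq0 : 0 ≤ q) (hq4 : q ≤ 4) (hκ : 0 < κ) (hγcont : Continuous γ) (hγ0 : γ 0 ≠ 0)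
    (hγlow : ∀ k : ℝ, |k| ≤ κ → (1 / 2) * |γ 0| ≤ |γ k|)
    (hγup : ∀ k : ℝ, |k| ≤ κ → |γ k| ≤ (3 / 2) * |γ 0|)
    (hsmall : ε * |t| ^ (-(1:ℝ)/2) ≤ (2 * π) ^ (-(1:ℝ)/2) * |γ 0| ^ ((1:ℝ)/2) * κ ^ 2) :
    (1 / 3) * ε ^ (q / 2) * |t| ^ (q / 4) /
        ((2 * π / 3) ^ ((1:ℝ)/2) * |γ 0| ^ (-(1:ℝ)/2) + ε * |t| ^ ((1:ℝ)/2)) ^ (q / 2)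
      ≤ sSup ((fun k : ℝ =>
          ε ^ q * (k ^ 2 + ε ^ 2) ^ (-q / 2) *
            |Real.sin ((1 / 2) * t * (ε ^ 2)⁻¹ * k ^ 4 * γ k)|) '' Set.Icc (-κ) κ) := by
  have ht' : 0 < |t| := abs_pos.mpr ht
  have hγ0' : 0 < |γ 0| := abs_pos.mpr hγ0
  have hπ : (0:ℝ) < π := Real.pi_pos
  set s := Real.sqrt |t| with hs
  set g := Real.sqrt |γ 0| with hg
  set p := Real.sqrt (2 * π) with hp
  set r := Real.sqrt (2 * π / 3) with hr
  have hs0 : 0 < s := Real.sqrt_pos.mpr ht'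
  have hg0 : 0 < g := Real.sqrt_pos.mpr hγ0'
  have hp0 : 0 < p := Real.sqrt_pos.mpr (by positivity)
  have hr0 : 0 < r := Real.sqrt_pos.mpr (by positivity)
  have hs2 : s ^ 2 = |t| := Real.sq_sqrt ht'.le
  have hg2 : g ^ 2 = |γ 0| := Real.sq_sqrt hγ0'.le
  have hp2 : p ^ 2 = 2 * π := Real.sq_sqrt (by positivity)
  have hr2 : r ^ 2 = 2 * π / 3 := Real.sq_sqrt (by positivity)
  -- rewrite rpow (1/2)'s as sqrt
  have hrwts : |t| ^ ((1:ℝ)/2) = s := (Real.sqrt_eq_rpow _).symm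
  have hrwtn : |t| ^ (-(1:ℝ)/2) = s⁻¹ := by
    rw [show (-(1:ℝ)/2) = -(1/2) by ring, Real.rpow_neg ht'.le, hrwts]
  have hrwg : |γ 0| ^ ((1:ℝ)/2) = g := (Real.sqrt_eq_rpow _).symm
  have hrwgn : |γ 0| ^ (-(1:ℝ)/2) = g⁻¹ := by
    rw [show (-(1:ℝ)/2) = -(1/2) by ring, Real.rpow_neg hγ0'.le, hrwg]
  have hrwpn : (2 * π) ^ (-(1:ℝ)/2) = p⁻¹ := by
    rw [show (-(1:ℝ)/2) = -(1/2) by ring, Real.rpow_neg (by positivity), hp,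
      Real.sqrt_eq_rpow]
  have hrwr : (2 * π / 3) ^ ((1:ℝ)/2) = r := (Real.sqrt_eq_rpow _).symm
  rw [hrwtn, hrwpn, hrwg] at hsmall
  -- squared smallness: 2π ε² ≤ |γ0| κ⁴ |t|
  have hsmall' : ε * p ≤ g * κ ^ 2 * s := by
    have h1 : ε * s⁻¹ * (s * p) ≤ p⁻¹ * g * κ ^ 2 * (s * p) := by
      apply mul_le_mul_of_nonneg_right hsmall (by positivity)
    calc ε * p = ε * s⁻¹ * (s * p) := by field_simp
    _ ≤ p⁻¹ * g * κ ^ 2 * (s * p) := h1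
    _ = g * κ ^ 2 * s := by field_simp
  have hsq : 2 * π * ε ^ 2 ≤ |γ 0| * κ ^ 4 * |t| := by
    have h2 := mul_le_mul hsmall' hsmall' (by positivity) (by positivity)
    calc 2 * π * ε ^ 2 = (ε * p) * (ε * p) := by rw [← hp2]; ring
    _ ≤ (g * κ ^ 2 * s) * (g * κ ^ 2 * s) := h2
    _ = |γ 0| * κ ^ 4 * |t| := by rw [← hg2, ← hs2]; ring
  -- the phase function
  set φ : ℝ → ℝ := fun k => (1 / 2) * t * (ε ^ 2)⁻¹ * k ^ 4 * γ k with hφ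
  have hφcont : Continuous fun k => |φ k| :=
    ((continuous_const.mul (continuous_pow 4)).mul hγcont).abs
  have hφ0 : |φ 0| = 0 := by simp [hφ]
  have hφκ : π / 2 ≤ |φ κ| := by
    have hγκ : (1 / 2) * |γ 0| ≤ |γ κ| := hγlow κ (by rw [abs_of_pos hκ])
    have : |φ κ| = (1 / 2) * |t| * (ε ^ 2)⁻¹ * κ ^ 4 * |γ κ| := by
      rw [hφ]; simp only [abs_mul, abs_inv, abs_pow, abs_of_pos hε, abs_of_pos hκ]
      norm_num
    rw [this]
    have hε2 : (0:ℝ) < ε ^ 2 := by positivity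
    calc π / 2 ≤ (1 / 2) * |t| * (ε ^ 2)⁻¹ * κ ^ 4 * ((1/2) * |γ 0|) := by
          rw [show (1 / 2) * |t| * (ε ^ 2)⁻¹ * κ ^ 4 * ((1/2) * |γ 0|)
              = (1/4 * (|γ 0| * κ ^ 4 * |t|)) / ε ^ 2 by field_simp; ring,
            le_div_iff₀ hε2]
          linarith
    _ ≤ (1 / 2) * |t| * (ε ^ 2)⁻¹ * κ ^ 4 * |γ κ| :=
          mul_le_mul_of_nonneg_left hγκ (by positivity)
  -- intermediate value: find k̂ with |φ k̂| = π/2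
  obtain ⟨a, hamem, ha⟩ :=
    intermediate_value_Icc hκ.le hφcont.continuousOn
      (by rw [hφ0]; exact ⟨by positivity, hφκ⟩ : π / 2 ∈ Set.Icc (|φ 0|) (|φ κ|))
  obtain ⟨ha0, haκ⟩ := hamem
  have ha' : |φ a| = π / 2 := ha
  have haabs : |a| ≤ κ := by rw [abs_of_nonneg ha0]; exact haκ
  -- the sine at a has absolute value 1
  have hsin : |Real.sin (φ a)| = 1 := by
    rcases abs_eq (by positivity : (0:ℝ) ≤ π / 2) |>.mp ha' with h | h
    · rw [h, Real.sin_pi_div_two]; norm_num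
    · rw [h, Real.sin_neg, Real.sin_pi_div_two]; norm_num
  -- bound on a²: a² * s * g ≤ p * ε
  have haγ : (1 / 2) * |γ 0| ≤ |γ a| := hγlow a haabs
  have hphase : (1 / 2) * |t| * (ε ^ 2)⁻¹ * a ^ 4 * |γ a| = π / 2 := by
    have : |φ a| = (1 / 2) * |t| * (ε ^ 2)⁻¹ * a ^ 4 * |γ a| := by
      rw [hφ]; simp only [abs_mul, abs_inv, abs_pow, abs_of_pos hε, abs_of_nonneg ha0]
      norm_num
    rw [← this, ha']
  have ha4 : a ^ 4 * |t| * |γ 0| ≤ 2 * π * ε ^ 2 := by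
    have h1 : (1 / 2) * |t| * (ε ^ 2)⁻¹ * a ^ 4 * ((1/2) * |γ 0|) ≤ π / 2 := by
      calc (1 / 2) * |t| * (ε ^ 2)⁻¹ * a ^ 4 * ((1/2) * |γ 0|)
          ≤ (1 / 2) * |t| * (ε ^ 2)⁻¹ * a ^ 4 * |γ a| :=
            mul_le_mul_of_nonneg_left haγ (by positivity)
      _ = π / 2 := hphase
    have hε2 : (0:ℝ) < ε ^ 2 := by positivity
    rw [show (1 / 2) * |t| * (ε ^ 2)⁻¹ * a ^ 4 * ((1/2) * |γ 0|)
        = (1/4 * (a ^ 4 * |t| * |γ 0|)) / ε ^ 2 by field_simp; ring,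
      div_le_iff₀ hε2] at h1
    linarith
  have ha2 : a ^ 2 * s * g ≤ p * ε := by
    have h1 : (a ^ 2 * s * g) ^ 2 ≤ (p * ε) ^ 2 := by
      calc (a ^ 2 * s * g) ^ 2 = a ^ 4 * s ^ 2 * g ^ 2 := by ring
      _ = a ^ 4 * |t| * |γ 0| := by rw [hs2, hg2]
      _ ≤ 2 * π * ε ^ 2 := ha4
      _ = (p * ε) ^ 2 := by rw [← hp2]; ring
    have := Real.sqrt_le_sqrt h1
    rwa [Real.sqrt_sq (by positivity), Real.sqrt_sq (by positivity)] at this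
  -- key: s * (a² + ε²) ≤ √3 * ε * D where D = r/g + ε s
  set D : ℝ := r * g⁻¹ + ε * s with hD
  have hD0 : 0 < D := by positivity
  have hsqrt3 : (1:ℝ) ≤ Real.sqrt 3 := by
    rw [show (1:ℝ) = Real.sqrt 1 by simp]; exact Real.sqrt_le_sqrt (by norm_num)
  have hpr : p = Real.sqrt 3 * r := by
    rw [hp, hr, ← Real.sqrt_mul (by norm_num : (0:ℝ) ≤ 3)]
    congr 1; ring
  have hkey : s * (a ^ 2 + ε ^ 2) ≤ Real.sqrt 3 * ε * D := by
    have h1 : s * a ^ 2 ≤ p * ε * g⁻¹ := by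
      rw [← mul_le_mul_iff_of_pos_right hg0]
      calc s * a ^ 2 * g = a ^ 2 * s * g := by ring
      _ ≤ p * ε := ha2
      _ = p * ε * g⁻¹ * g := by field_simp
    have h2 : s * ε ^ 2 ≤ Real.sqrt 3 * (s * ε ^ 2) := le_mul_of_one_le_left (by positivity) hsqrt3
    calc s * (a ^ 2 + ε ^ 2) = s * a ^ 2 + s * ε ^ 2 := by ring
    _ ≤ p * ε * g⁻¹ + Real.sqrt 3 * (s * ε ^ 2) := add_le_add h1 h2
    _ = Real.sqrt 3 * ε * D := by rw [hpr, hD]; ring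
  -- value at a
  have hA0 : 0 < a ^ 2 + ε ^ 2 := by positivity
  have hval : (1 / 3) * ε ^ (q / 2) * |t| ^ (q / 4) / D ^ (q / 2)
      ≤ ε ^ q * (a ^ 2 + ε ^ 2) ^ (-q / 2) * |Real.sin (φ a)| := by
    rw [hsin, mul_one]
    rw [show (-q / 2) = -(q/2) by ring, Real.rpow_neg hA0.le]
    rw [div_le_iff₀ (by positivity), ← mul_le_mul_iff_of_pos_right
      (by positivity : (0:ℝ) < (a ^ 2 + ε ^ 2) ^ (q/2))]
    have hcancel : ε ^ q * ((a ^ 2 + ε ^ 2) ^ (q/2))⁻¹ * D ^ (q / 2) * (a ^ 2 + ε ^ 2) ^ (q/2)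
        = ε ^ q * D ^ (q / 2) := by
      field_simp
    rw [hcancel]
    have hεq : ε ^ q = ε ^ (q/2) * ε ^ (q/2) := by
      rw [← Real.rpow_add hε]; norm_num
    have htq : |t| ^ (q / 4) = s ^ (q/2) := by
      rw [hs, Real.sqrt_eq_rpow, ← Real.rpow_mul ht'.le]
      congr 1; ring
    rw [hεq, htq]
    have hmain : (s * (a ^ 2 + ε ^ 2)) ^ (q/2) ≤ 3 * (ε * D) ^ (q/2) := by
      calc (s * (a ^ 2 + ε ^ 2)) ^ (q/2) ≤ (Real.sqrt 3 * ε * D) ^ (q/2) :=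
            Real.rpow_le_rpow (by positivity) hkey (by positivity)
      _ = (Real.sqrt 3) ^ (q/2) * (ε * D) ^ (q/2) := by
            rw [mul_assoc, Real.mul_rpow (by positivity) (by positivity)]
      _ ≤ 3 * (ε * D) ^ (q/2) := by
            apply mul_le_mul_of_nonneg_right _ (by positivity)
            calc (Real.sqrt 3 : ℝ) ^ (q/2) ≤ (Real.sqrt 3) ^ (2:ℝ) :=
                  Real.rpow_le_rpow_of_exponent_le hsqrt3 (by linarith)
            _ = 3 := by
                  rw [show (2:ℝ) = ((2:ℕ):ℝ) by norm_num, Real.rpow_natCast,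
                    Real.sq_sqrt (by norm_num)]
    calc 1 / 3 * ε ^ (q/2) * s ^ (q/2) * (a ^ 2 + ε ^ 2) ^ (q/2)
        = 1 / 3 * (ε ^ (q/2) * (s ^ (q/2) * (a ^ 2 + ε ^ 2) ^ (q/2))) := by ring
    _ = 1 / 3 * (ε ^ (q/2) * (s * (a ^ 2 + ε ^ 2)) ^ (q/2)) := by
        rw [Real.mul_rpow hs0.le hA0.le]
    _ ≤ 1 / 3 * (ε ^ (q/2) * (3 * (ε * D) ^ (q/2))) := by
        apply mul_le_mul_of_nonneg_left _ (by norm_num)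
        exact mul_le_mul_of_nonneg_left hmain (by positivity)
    _ = ε ^ (q/2) * (ε * D) ^ (q/2) := by ring
    _ = ε ^ (q/2) * (ε ^ (q/2) * D ^ (q/2)) := by
        rw [Real.mul_rpow hε.le hD0.le]
    _ = ε ^ (q/2) * ε ^ (q/2) * D ^ (q/2) := by ring
  -- conclude via sSup
  rw [hrwgn, hrwr, hrwts]
  have hmem : ε ^ q * (a ^ 2 + ε ^ 2) ^ (-q / 2) * |Real.sin (φ a)|
      ∈ (fun k : ℝ => ε ^ q * (k ^ 2 + ε ^ 2) ^ (-q / 2) *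
          |Real.sin ((1 / 2) * t * (ε ^ 2)⁻¹ * k ^ 4 * γ k)|) '' Set.Icc (-κ) κ :=
    ⟨a, ⟨by linarith, haκ⟩, rfl⟩
  have hbdd : BddAbove ((fun k : ℝ => ε ^ q * (k ^ 2 + ε ^ 2) ^ (-q / 2) *
      |Real.sin ((1 / 2) * t * (ε ^ 2)⁻¹ * k ^ 4 * γ k)|) '' Set.Icc (-κ) κ) := by
    refine ⟨ε ^ q * (ε ^ 2) ^ (-q / 2), ?_⟩
    rintro x ⟨k, -, rfl⟩
    calc ε ^ q * (k ^ 2 + ε ^ 2) ^ (-q / 2) * |Real.sin ((1 / 2) * t * (ε ^ 2)⁻¹ * k ^ 4 * γ k)|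
        ≤ ε ^ q * (k ^ 2 + ε ^ 2) ^ (-q / 2) * 1 := by
          apply mul_le_mul_of_nonneg_left (abs_le.mpr ⟨Real.neg_one_le_sin _, Real.sin_le_one _⟩) (by positivity)
    _ = ε ^ q * (k ^ 2 + ε ^ 2) ^ (-q / 2) := by ring
    _ ≤ ε ^ q * (ε ^ 2) ^ (-q / 2) := by
          apply mul_le_mul_of_nonneg_left _ (by positivity)
          exact Real.rpow_le_rpow_of_nonpos (by positivity) (by linarith [sq_nonneg k])
            (by linarith : -q / 2 ≤ 0)
    _ ≤ ε ^ q * (ε ^ 2) ^ (-q / 2) := le_refl _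
  exact le_trans hval (le_csSup hbdd hmem)
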